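/- Let M be an Orlicz function and 1 ≤ p < ∞ with sup_{t,s ≥ 1} M(t)·s^p / M(ts) < ∞ (i.e., p < α_M^∞ or p witnesses the sup in the definition of the lower index). Suppose ψ : (0,1] → (0,∞) satisfies ψ(s) = lim_{n→∞} M(s·tₙ)/M(tₙ) for a sequence tₙ ↑ ∞, tₙ ≥ 1. Then sup_{0<u,v≤1} ψ(uv)/(v^p·ψ(u)) < ∞, i.e., the lower Matuszewska–Orlicz index at zero of ψ satisfies α_ψ^0 ≥ p. -/

import Mathlib

open Filter Set Real

theorem stmt_19 (M : ℝ → ℝ) (p : ℝ) (ψ : ℝ → ℝ) (t : ℕ → ℝ)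
    (hM_mono : MonotoneOn M (Set.Ici 0))
    (hM_conv : ConvexOn ℝ (Set.Ici 0) M)
    (hM_cont : ContinuousOn M (Set.Ici 0))
    (hM0 : M 0 = 0)
    (hM_inf : Tendsto M atTop atTop)
    (hp : 1 ≤ p)
    (hsup : ∃ C : ℝ, ∀ x : ℝ, 1 ≤ x → ∀ s : ℝ, 1 ≤ s → M x * s ^ p / M (x * s) ≤ C)
    (ht_mono : Monotone t) (ht_ge : ∀ n, 1 ≤ t n)
    (ht_inf : Tendsto t atTop atTop)
    (hψ : ∀ s ∈ Set.Ioc (0:ℝ) 1,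
      Tendsto (fun n => M (s * t n) / M (t n)) atTop (nhds (ψ s))) :
    ∃ C : ℝ, ∀ u ∈ Set.Ioc (0:ℝ) 1, ∀ v ∈ Set.Ioc (0:ℝ) 1,
      ψ (u * v) / (v ^ p * ψ u) ≤ C := by
  obtain ⟨C, hC⟩ := hsup
  refine ⟨max C 0, ?_⟩
  rintro u ⟨hu0, hu1⟩ v ⟨hv0, hv1⟩
  have hMnn : ∀ x : ℝ, 0 ≤ x → 0 ≤ M x := by
    intro x hx
    have := hM_mono (Set.mem_Ici.mpr le_rfl) (Set.mem_Ici.mpr hx) hx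
    rwa [hM0] at this
  have hψnn : ∀ s ∈ Set.Ioc (0:ℝ) 1, 0 ≤ ψ s := by
    intro s hs
    refine ge_of_tendsto (hψ s hs) (Eventually.of_forall fun n => ?_)
    have htn : (0:ℝ) < t n := lt_of_lt_of_le one_pos (ht_ge n)
    exact div_nonneg (hMnn _ (mul_pos hs.1 htn).le) (hMnn _ htn.le)
  have huv : u * v ∈ Set.Ioc (0:ℝ) 1 :=
    ⟨mul_pos hu0 hv0, mul_le_one₀ hu1 hv0.le hv1⟩
  have hvp : 0 < v ^ p := Real.rpow_pos_of_pos hv0 p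
  -- pick x0 with M x ≥ 1 for x ≥ x0
  obtain ⟨x0, hx0⟩ := (Filter.eventually_atTop).mp (hM_inf.eventually_ge_atTop 1)
  have hkey : ψ (u * v) ≤ C * v ^ p * ψ u := by
    refine le_of_tendsto_of_tendsto (hψ (u*v) huv)
      ((hψ u ⟨hu0, hu1⟩).const_mul (C * v ^ p)) ?_
    have hev : ∀ᶠ n in atTop, max x0 1 / (u * v) ≤ t n :=
      ht_inf.eventually_ge_atTop _
    filter_upwards [hev] with n hn
    have huvpos : (0:ℝ) < u * v := mul_pos hu0 hv0
    have h1 : max x0 1 ≤ u * v * t n := by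
      rw [div_le_iff₀ huvpos] at hn; linarith [hn]
    have htn : (0:ℝ) < t n := lt_of_lt_of_le one_pos (ht_ge n)
    have hle1 : (1:ℝ) ≤ u * v * t n := le_trans (le_max_right _ _) h1
    have hchain : u * v * t n ≤ u * t n := by nlinarith
    have hchain2 : u * t n ≤ t n := by nlinarith
    have hMu : (1:ℝ) ≤ M (u * t n) :=
      hx0 _ (le_trans (le_trans (le_max_left _ _) h1) hchain)
    have hMt : (1:ℝ) ≤ M (t n) :=
      hx0 _ (le_trans (le_trans (le_max_left _ _) h1) (le_trans hchain hchain2))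
    have hMupos : (0:ℝ) < M (u * t n) := lt_of_lt_of_le one_pos hMu
    have hMtpos : (0:ℝ) < M (t n) := lt_of_lt_of_le one_pos hMt
    have hvinv : (1:ℝ) ≤ v⁻¹ := (one_le_inv₀ hv0).mpr hv1
    have key := hC (u * v * t n) hle1 v⁻¹ hvinv
    have heq : u * v * t n * v⁻¹ = u * t n := by
      field_simp
    rw [heq] at key
    rw [div_le_iff₀ hMupos] at key
    rw [Real.inv_rpow hv0.le] at key
    have key2 : M (u * v * t n) ≤ C * v ^ p * M (u * t n) := by
      have h := mul_le_mul_of_nonneg_right key hvp.le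
      rw [mul_assoc, inv_mul_cancel₀ hvp.ne', mul_one] at h
      nlinarith [h]
    show M (u * v * t n) / M (t n) ≤ C * v ^ p * (M (u * t n) / M (t n))
    rw [← mul_div_assoc]
    exact div_le_div_of_nonneg_right key2 hMtpos.le
  have hψu := hψnn u ⟨hu0, hu1⟩
  rcases eq_or_lt_of_le hψu with h0 | hpos
  · rw [← h0, mul_zero, div_zero]
    exact le_max_right _ _
  · rw [div_le_iff₀ (by positivity)]
    calc ψ (u*v) ≤ C * v ^ p * ψ u := hkey
    _ ≤ max C 0 * (v ^ p * ψ u) := by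
        rw [← mul_assoc]
        exact mul_le_mul_of_nonneg_right
          (mul_le_mul_of_nonneg_right (le_max_left _ _) hvp.le) hψu
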